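/- Let k, m be positive integers with m ≥ 1, let N = m·k, and let y₁, ..., y_N be real numbers with y₁ + ... + y_N > 0. Then the number of k-element subsets S of {1,...,N} with ∑_{i∈S} yᵢ ≥ 0 is at least C(N-1, k-1). -/

import Mathlib

open Finset

/-- A permutation mapping one finset onto another of equal cardinality. -/
lemma exists_perm_image_eq {α : Type*} [Fintype α] [DecidableEq α]
    {s t : Finset α} (h : s.card = t.card) :
    ∃ σ : Equiv.Perm α, s.image σ = t := by
  classical
  let e : {x // x ∈ s} ≃ {x // x ∈ t} := Finset.equivOfCardEq h
  refine ⟨e.extendSubtype, ?_⟩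
  apply Finset.eq_of_subset_of_card_le
  · intro x hx
    simp only [Finset.mem_image] at hx
    obtain ⟨a, ha, rfl⟩ := hx
    exact e.extendSubtype_mem a ha
  · rw [Finset.card_image_of_injective _ (Equiv.injective _), h]

/-- All fibers of the map `σ ↦ B.image σ` (over sets of the right size) have the
same cardinality, for any base blocks of the same size. -/
lemma fiber_card_eq {α : Type*} [Fintype α] [DecidableEq α]
    {B B' S S' : Finset α} (hB : B.card = B'.card) (hS : B.card = S.card)
    (hS' : B'.card = S'.card) :
    ((Finset.univ : Finset (Equiv.Perm α)).filter
        (fun σ : Equiv.Perm α => B.image ⇑σ = S)).card =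
      ((Finset.univ : Finset (Equiv.Perm α)).filter
        (fun σ : Equiv.Perm α => B'.image ⇑σ = S')).card := by
  classical
  obtain ⟨ρ, hρ⟩ := exists_perm_image_eq (hB.symm : B'.card = B.card)
  obtain ⟨τ', hτ'⟩ := exists_perm_image_eq (show S.card = S'.card by omega)
  refine Finset.card_bij' (fun σ _ => τ' * σ * ρ) (fun σ _ => τ'⁻¹ * σ * ρ⁻¹) ?_ ?_ ?_ ?_
  · intro σ hσ
    simp only [Finset.mem_filter, Finset.mem_univ, true_and] at hσ ⊢
    have h0 : B'.image ⇑(τ' * σ * ρ) = ((B'.image ⇑ρ).image ⇑σ).image ⇑τ' := by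
      simp [Finset.image_image, Function.comp_def]
    rw [h0, hρ, hσ, hτ']
  · intro σ hσ
    simp only [Finset.mem_filter, Finset.mem_univ, true_and] at hσ ⊢
    have h1 : B.image ⇑(τ'⁻¹ * σ * ρ⁻¹) = ((B.image ⇑ρ⁻¹).image ⇑σ).image ⇑τ'⁻¹ := by
      simp [Finset.image_image, Function.comp_def]
    have h2 : B.image ⇑ρ⁻¹ = B' := by
      rw [← hρ, Finset.image_image]
      simp [Function.comp_def]
    rw [h1, h2, hσ, ← hτ', Finset.image_image]
    simp [Function.comp_def]
  · intro σ hσ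
    ext x
    simp [mul_assoc]
  · intro σ hσ
    ext x
    simp [mul_assoc]

theorem averaging_bound (k m : ℕ) (hk : 0 < k) (hm : 1 ≤ m)
    (y : ℕ → ℝ)
    (hsum : 0 < ∑ i ∈ Finset.Icc 1 (m * k), y i) :
    (m * k - 1).choose (k - 1) ≤
      (((Finset.Icc 1 (m * k)).powersetCard k).filter
        (fun S => 0 ≤ ∑ i ∈ S, y i)).card := by
  classical
  set N := m * k with hN
  have hN0 : 0 < N := Nat.mul_pos (lt_of_lt_of_le one_pos hm) hk
  -- transfer to Fin N
  set y' : Fin N → ℝ := fun i => y (i.val + 1) with hy'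
  set emb : Fin N ↪ ℕ := ⟨fun i => i.val + 1, fun a b hab => by
    simpa [Fin.ext_iff] using hab⟩ with hemb
  have huniv : (Finset.univ : Finset (Fin N)).map emb = Finset.Icc 1 N := by
    ext n
    simp only [Finset.mem_map, Finset.mem_univ, true_and, Finset.mem_Icc, hemb,
      Function.Embedding.coeFn_mk]
    constructor
    · rintro ⟨i, rfl⟩; exact ⟨Nat.succ_le_succ (Nat.zero_le _), i.isLt⟩
    · rintro ⟨h1, h2⟩
      refine ⟨⟨n - 1, by omega⟩, ?_⟩
      show n - 1 + 1 = n
      omega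
  set A : Finset (Finset (Fin N)) :=
    ((Finset.univ : Finset (Fin N)).powersetCard k).filter
      (fun S => 0 ≤ ∑ i ∈ S, y' i) with hA
  have hcard_transfer :
      (((Finset.Icc 1 (m * k)).powersetCard k).filter
        (fun S => 0 ≤ ∑ i ∈ S, y i)).card = A.card := by
    rw [hA, ← huniv, Finset.powersetCard_map, Finset.filter_map, Finset.card_map]
    congr 1
    apply Finset.filter_congr
    intro S _
    simp only [Function.comp, RelEmbedding.coe_toEmbedding, Finset.mapEmbedding_apply,
      Finset.sum_map, hemb, Function.Embedding.coeFn_mk, hy']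
    exact Iff.rfl
  rw [hcard_transfer]
  -- blocks
  have hdiv : ∀ i : Fin N, i.val / k < m := fun i =>
    (Nat.div_lt_iff_lt_mul hk).mpr i.isLt
  set g : Fin N → Fin m := fun i => ⟨i.val / k, hdiv i⟩ with hg
  set B : Fin m → Finset (Fin N) :=
    fun j => (Finset.univ : Finset (Fin N)).filter (fun i => g i = j) with hB
  have hBcard : ∀ j, (B j).card = k := by
    intro j
    rw [hB]
    rw [show ((Finset.univ : Finset (Fin N)).filter (fun i => g i = j)).card
        = (Finset.Ico (j.val * k) (j.val * k + k)).card from ?_]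
    · rw [Nat.card_Ico]; omega
    apply Finset.card_bij (fun i _ => i.val)
    · intro i hi
      simp only [Finset.mem_filter, Finset.mem_univ, true_and, hg, Fin.ext_iff] at hi
      simp only [Finset.mem_Ico]
      constructor
      · calc j.val * k = i.val / k * k := by rw [hi]
          _ ≤ i.val := Nat.div_mul_le_self _ _
      · have hdm := Nat.div_add_mod i.val k
        have hmod := i.val.mod_lt hk
        calc i.val < (i.val / k + 1) * k := by
              rw [Nat.add_mul, one_mul, Nat.mul_comm]; omega
          _ = j.val * k + k := by rw [hi, Nat.add_mul, one_mul]
    · intro a _ b _ hab; exact Fin.ext hab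
    · intro x hx
      simp only [Finset.mem_Ico] at hx
      have hxN : x < N := by
        calc x < j.val * k + k := hx.2
          _ = (j.val + 1) * k := by ring
          _ ≤ m * k := Nat.mul_le_mul_right _ (by omega)
      refine ⟨⟨x, hxN⟩, ?_, rfl⟩
      simp only [Finset.mem_filter, Finset.mem_univ, true_and, hg, Fin.ext_iff]
      show x / k = j.val
      exact Nat.div_eq_of_lt_le hx.1 (by rw [Nat.add_mul, one_mul]; exact hx.2)
  -- total sum over univ Fin N is positive
  have hsum' : 0 < ∑ i : Fin N, y' i := by
    have : ∑ i ∈ (Finset.univ : Finset (Fin N)).map emb, y i = ∑ i : Fin N, y' i := by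
      rw [Finset.sum_map]; rfl
    rw [← this, huniv]; exact hsum
  -- each permutation has a nonnegative block
  have hexists : ∀ σ : Equiv.Perm (Fin N), ∃ j : Fin m, 0 ≤ ∑ i ∈ (B j).image σ, y' i := by
    intro σ
    by_contra hcon
    push_neg at hcon
    have hsum_blocks : ∑ j : Fin m, ∑ i ∈ (B j).image σ, y' i = ∑ i : Fin N, y' i := by
      have : ∀ j : Fin m, ∑ i ∈ (B j).image σ, y' i
          = ∑ i ∈ (Finset.univ : Finset (Fin N)).filter (fun i => g i = j), y' (σ i) := by
        intro j
        rw [Finset.sum_image (fun a _ b _ h => σ.injective h)]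
      rw [Finset.sum_congr rfl (fun j _ => this j)]
      rw [Finset.sum_fiberwise_of_maps_to (fun x _ => Finset.mem_univ (g x))
        (fun i => y' (σ i))]
      exact Equiv.sum_comp σ y'
    have hneg : ∑ j : Fin m, ∑ i ∈ (B j).image σ, y' i < 0 := by
      have hmne : (Finset.univ : Finset (Fin m)).Nonempty := by
        refine ⟨⟨0, by omega⟩, Finset.mem_univ _⟩
      exact Finset.sum_neg (fun j _ => hcon j) hmne
    rw [hsum_blocks] at hneg
    linarith
  -- the double counting
  set P := (Finset.univ : Finset (Equiv.Perm (Fin N))) with hP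
  set f : ℕ := (P.filter (fun σ : Equiv.Perm (Fin N) => (B ⟨0, by omega⟩).image ⇑σ = B ⟨0, by omega⟩)).card with hf
  have hfib : ∀ (j : Fin m) (S : Finset (Fin N)), S ∈ A →
      (P.filter (fun σ : Equiv.Perm (Fin N) => (B j).image ⇑σ = S)).card = f := by
    intro j S hS
    rw [hf]
    apply fiber_card_eq
    · simp [hBcard]
    · rw [hBcard]
      rw [hA, Finset.mem_filter, Finset.mem_powersetCard] at hS
      exact hS.1.2.symm
    · simp [hBcard]
  have hfibAll : ∀ (j : Fin m) (S : Finset (Fin N)),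
      S ∈ (Finset.univ : Finset (Fin N)).powersetCard k →
      (P.filter (fun σ : Equiv.Perm (Fin N) => (B j).image ⇑σ = S)).card = f := by
    intro j S hS
    rw [hf]
    apply fiber_card_eq
    · simp [hBcard]
    · rw [hBcard]
      rw [Finset.mem_powersetCard] at hS
      exact hS.2.symm
    · simp [hBcard]
  -- f is positive
  have hfpos : 0 < f := by
    rw [hf]
    apply Finset.card_pos.mpr
    refine ⟨1, ?_⟩
    simp [Finset.mem_filter, hP]
  -- N! = C(N,k) * f
  have hNfact : (Fintype.card (Equiv.Perm (Fin N))) = N.choose k * f := by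
    have hmaps : ∀ σ ∈ P, (B ⟨0, by omega⟩).image σ ∈
        (Finset.univ : Finset (Fin N)).powersetCard k := by
      intro σ _
      rw [Finset.mem_powersetCard]
      exact ⟨Finset.subset_univ _, by
        rw [Finset.card_image_of_injective _ σ.injective, hBcard]⟩
    have := Finset.card_eq_sum_card_fiberwise hmaps
    rw [← Finset.card_univ, ← hP, this]
    rw [Finset.sum_congr rfl (fun S hS => hfibAll ⟨0, by omega⟩ S hS)]
    rw [Finset.sum_const, Finset.card_powersetCard, Finset.card_univ, Fintype.card_fin,
      smul_eq_mul]
  -- N! ≤ m * A.card * f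
  have hmain : Fintype.card (Equiv.Perm (Fin N)) ≤ m * (A.card * f) := by
    have step1 : Fintype.card (Equiv.Perm (Fin N)) ≤
        ∑ σ ∈ P, ((Finset.univ : Finset (Fin m)).filter
          (fun j => 0 ≤ ∑ i ∈ (B j).image σ, y' i)).card := by
      rw [← Finset.card_univ, ← hP, Finset.card_eq_sum_ones]
      apply Finset.sum_le_sum
      intro σ _
      apply Finset.card_pos.mpr
      obtain ⟨j, hj⟩ := hexists σ
      exact ⟨j, Finset.mem_filter.mpr ⟨Finset.mem_univ _, hj⟩⟩
    have step2 : ∑ σ ∈ P, ((Finset.univ : Finset (Fin m)).filter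
          (fun j => 0 ≤ ∑ i ∈ (B j).image σ, y' i)).card
        = ∑ j : Fin m, (P.filter (fun σ : Equiv.Perm (Fin N) => 0 ≤ ∑ i ∈ (B j).image ⇑σ, y' i)).card := by
      simp only [Finset.card_filter]
      rw [Finset.sum_comm]
    have step3 : ∀ j : Fin m,
        (P.filter (fun σ : Equiv.Perm (Fin N) => 0 ≤ ∑ i ∈ (B j).image ⇑σ, y' i)).card = A.card * f := by
      intro j
      have hmaps : ∀ σ ∈ P.filter (fun σ : Equiv.Perm (Fin N) => 0 ≤ ∑ i ∈ (B j).image ⇑σ, y' i),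
          (B j).image σ ∈ A := by
        intro σ hσ
        rw [Finset.mem_filter] at hσ
        rw [hA, Finset.mem_filter, Finset.mem_powersetCard]
        exact ⟨⟨Finset.subset_univ _,
          by rw [Finset.card_image_of_injective _ σ.injective, hBcard]⟩, hσ.2⟩
      rw [Finset.card_eq_sum_card_fiberwise hmaps]
      have : ∀ S ∈ A, ((P.filter (fun σ : Equiv.Perm (Fin N) => 0 ≤ ∑ i ∈ (B j).image ⇑σ, y' i)).filter
          (fun σ : Equiv.Perm (Fin N) => (B j).image ⇑σ = S)).card = f := by
        intro S hS
        rw [← hfib j S hS]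
        congr 1
        ext σ
        simp only [Finset.mem_filter, Finset.mem_univ, true_and, hP]
        constructor
        · rintro ⟨_, h⟩; exact h
        · intro h
          refine ⟨?_, h⟩
          rw [h]
          rw [hA, Finset.mem_filter] at hS
          exact hS.2
      rw [Finset.sum_congr rfl this, Finset.sum_const, smul_eq_mul]
    calc Fintype.card (Equiv.Perm (Fin N)) ≤ _ := step1
      _ = ∑ j : Fin m, (P.filter (fun σ : Equiv.Perm (Fin N) => 0 ≤ ∑ i ∈ (B j).image ⇑σ, y' i)).card := step2
      _ = ∑ _j : Fin m, A.card * f := Finset.sum_congr rfl (fun j _ => step3 j)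
      _ = m * (A.card * f) := by rw [Finset.sum_const, Finset.card_univ, Fintype.card_fin,
            smul_eq_mul]
  -- combine: C(N,k) * f ≤ m * A.card * f, so C(N,k) ≤ m * A.card
  have hchoose_le : N.choose k ≤ m * A.card := by
    have h1 : N.choose k * f ≤ m * A.card * f := by
      rw [← hNfact, mul_assoc]; exact hmain
    exact Nat.le_of_mul_le_mul_right h1 hfpos
  -- C(N,k) = m * C(N-1, k-1)
  have hchoose_eq : N.choose k = m * ((N - 1).choose (k - 1)) := by
    obtain ⟨n, hn⟩ : ∃ n, N = n + 1 := ⟨N - 1, by omega⟩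
    obtain ⟨l, hl⟩ : ∃ l, k = l + 1 := ⟨k - 1, by omega⟩
    rw [hn, hl, Nat.add_sub_cancel, Nat.add_sub_cancel]
    have key := Nat.add_one_mul_choose_eq n l
    have hmk : m * (l + 1) = n + 1 := by rw [← hl]; omega
    have h3 : (n + 1).choose (l + 1) * (l + 1) = m * n.choose l * (l + 1) := by
      calc (n + 1).choose (l + 1) * (l + 1) = (n + 1) * n.choose l := key.symm
        _ = m * (l + 1) * n.choose l := by rw [hmk]
        _ = m * n.choose l * (l + 1) := by ring
    exact Nat.eq_of_mul_eq_mul_right (by omega) h3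
  rw [hchoose_eq] at hchoose_le
  exact Nat.le_of_mul_le_mul_left hchoose_le (by omega)
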